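/- Let K be a compact Hausdorff space that has a G_δ-point. Then C(K) is not 1-rigid octahedral: there exists f ∈ S_{C(K)} such that for every g ∈ B_{C(K)}, min(‖f + g‖, ‖f − g‖) < 2. -/
import Mathlib


universe u

lemma aux_key {K : Type u} [TopologicalSpace K] [CompactSpace K] {x : K}
    (f g : C(K, ℝ)) (hf1 : ({x} : Set K) = f ⁻¹' {1})
    (hf01 : ∀ y, f y ∈ Set.Icc (0 : ℝ) 1) (hg : ‖g‖ ≤ 1) (h2 : 2 ≤ ‖f + g‖) :
    g x = 1 := by
  have : Nonempty K := ⟨x⟩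
  obtain ⟨y₀, -, hy₀⟩ := CompactSpace.isCompact_univ.exists_isMaxOn ⟨x, Set.mem_univ x⟩
    (continuous_abs.comp (f + g).continuous).continuousOn
  have hnorm : ‖f + g‖ ≤ |(f + g) y₀| := by
    apply ContinuousMap.norm_le _ (abs_nonneg _) |>.2
    intro z
    simpa [Real.norm_eq_abs] using hy₀ (Set.mem_univ z)
  have hgb : ∀ z, |g z| ≤ 1 := fun z => by
    simpa [Real.norm_eq_abs] using (g.norm_coe_le_norm z).trans hg
  have hfle : f y₀ ≤ 1 := (hf01 y₀).2
  have hfge : 0 ≤ f y₀ := (hf01 y₀).1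
  have hgle : g y₀ ≤ 1 := (abs_le.1 (hgb y₀)).2
  have hgge : -1 ≤ g y₀ := (abs_le.1 (hgb y₀)).1
  have habs : 2 ≤ |f y₀ + g y₀| := le_trans h2 (by simpa using hnorm)
  have hsum : f y₀ + g y₀ = 2 := by
    rcases abs_le.1 (le_of_eq (rfl : |f y₀ + g y₀| = _)) with ⟨_, _⟩
    rcases abs_cases (f y₀ + g y₀) with ⟨he, _⟩ | ⟨he, _⟩
    · linarith [habs, hfle, hgle, he.symm.le]
    · linarith [habs, hfge, hgge, he.symm.le]
  have hfy : f y₀ = 1 := by linarith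
  have hxy : y₀ = x := by
    have : y₀ ∈ f ⁻¹' {1} := by simpa using hfy
    rw [← hf1] at this; simpa using this
  have : g y₀ = 1 := by linarith
  rwa [hxy] at this

/-- If a compact Hausdorff space `K` has a `G_δ`-point, then `C(K)` is not `1`-rigid
octahedral: there is a norm-one `f ∈ C(K)` such that `min ‖f + g‖ ‖f - g‖ < 2` for every
`g` in the closed unit ball. -/
theorem ck_not_rigid_octahedral_of_Gdelta (K : Type u) [TopologicalSpace K]
    [CompactSpace K] [T2Space K] (x : K) (hx : IsGδ ({x} : Set K)) :
    ∃ f : C(K, ℝ), ‖f‖ = 1 ∧ ∀ g : C(K, ℝ), ‖g‖ ≤ 1 → min ‖f + g‖ ‖f - g‖ < 2 := by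
  obtain ⟨f, hf1, -, -, hf01⟩ := exists_continuous_one_zero_of_isCompact_of_isGδ
    isCompact_singleton hx isClosed_empty (Set.disjoint_empty _)
  have hfx : f x = 1 := by
    have : x ∈ f ⁻¹' {1} := hf1 ▸ Set.mem_singleton x
    simpa using this
  have hfnorm : ‖f‖ = 1 := by
    refine le_antisymm (ContinuousMap.norm_le _ zero_le_one |>.2 fun z => ?_) ?_
    · rw [Real.norm_eq_abs, abs_le]
      exact ⟨by linarith [(hf01 z).1], (hf01 z).2⟩
    · calc (1 : ℝ) = ‖f x‖ := by simp [hfx]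
        _ ≤ ‖f‖ := f.norm_coe_le_norm x
  refine ⟨f, hfnorm, fun g hg => ?_⟩
  by_contra h
  push_neg at h
  rw [le_min_iff] at h
  have h1 : g x = 1 := aux_key f g hf1 hf01 hg h.1
  have h2 : (-g) x = 1 := by
    apply aux_key f (-g) hf1 hf01 (by simpa using hg)
    simpa [sub_eq_add_neg] using h.2
  simp only [ContinuousMap.neg_apply, h1] at h2
  linarith
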